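/- Let Y be a Hermitian-matrix-valued random variable with ‖Y‖ ≤ 1 almost surely and E[Y] = 0. Then ‖E[exp(Y)]‖ ≤ exp(‖E[Y²]‖), where ‖·‖ denotes the operator norm. -/

import Mathlib

open Matrix MeasureTheory
open scoped ComplexOrder

noncomputable def opNorm {d : ℕ} (A : Matrix (Fin d) (Fin d) ℂ) : ℝ :=
  ‖LinearMap.toContinuousLinearMap (Matrix.toEuclideanLin A)‖

/-- Entrywise expectation of a matrix-valued random variable. -/
noncomputable def matExp {Ω : Type*} [MeasurableSpace Ω] (μ : Measure Ω) {d : ℕ}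
    (Y : Ω → Matrix (Fin d) (Fin d) ℂ) : Matrix (Fin d) (Fin d) ℂ :=
  fun i j => ∫ ω, Y ω i j ∂μ

lemma aux_exp_le {x : ℝ} (h : |x| ≤ 1) : Real.exp x ≤ 1 + x + x ^ 2 := by
  have h2 := Real.exp_bound h (n := 2) (by norm_num)
  have h1 : |Real.exp x - (1 + x)| ≤ |x| ^ 2 * (3 / 4) := by
    have : ∑ m ∈ Finset.range 2, x ^ m / m.factorial = 1 + x := by
      simp [Finset.sum_range_succ]
    rw [this] at h2
    convert h2 using 2
    norm_num
  have h3 : |x| ^ 2 = x ^ 2 := sq_abs x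
  nlinarith [abs_le.mp h1, sq_nonneg x]


open scoped Matrix.Norms.L2Operator in
lemma eig_abs_le {d : ℕ} {A : Matrix (Fin d) (Fin d) ℂ} (hA : A.IsHermitian)
    (h : opNorm A ≤ 1) (i : Fin d) : |hA.eigenvalues i| ≤ 1 := by
  have : Nonempty (Fin d) := ⟨i⟩
  have hnt : Nontrivial (EuclideanSpace ℂ (Fin d)) :=
    inferInstance
  haveI : NormOneClass (Matrix (Fin d) (Fin d) ℂ) :=
    ⟨by rw [Matrix.cstar_norm_def, _root_.map_one]; exact norm_one⟩
  have hmem := hA.eigenvalues_mem_spectrum_real i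
  have h2 : ‖hA.eigenvalues i‖ ≤ ‖A‖ := spectrum.norm_le_norm_of_mem hmem
  have h3 : ‖A‖ = opNorm A := rfl
  rw [h3] at h2
  simpa using h2.trans h

lemma psd_main {d : ℕ} {A : Matrix (Fin d) (Fin d) ℂ} (hA : A.IsHermitian)
    (hb : ∀ i, |hA.eigenvalues i| ≤ 1) :
    (NormedSpace.exp A).PosSemidef ∧
      (1 + A + A * A - NormedSpace.exp A).PosSemidef := by
  classical
  set U : Matrix (Fin d) (Fin d) ℂ := (hA.eigenvectorUnitary : Matrix (Fin d) (Fin d) ℂ) with hUdef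
  have hU2 : star U * U = 1 := Unitary.coe_star_mul_self hA.eigenvectorUnitary
  have hU1 : U * star U = 1 := Unitary.coe_mul_star_self hA.eigenvectorUnitary
  have hUinv : U⁻¹ = star U := Matrix.inv_eq_left_inv hU2
  set lam : Fin d → ℝ := hA.eigenvalues with hlam
  have hspec : A = U * Matrix.diagonal (fun i => (lam i : ℂ)) * star U := by
    exact hA.spectral_theorem
  have hpsd : ∀ f : ℝ → ℝ, (∀ i, 0 ≤ f (lam i)) →
      (U * Matrix.diagonal (fun i => (f (lam i) : ℂ)) * star U).PosSemidef := by
    intro f hf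
    have hdiag : (Matrix.diagonal (fun i => (f (lam i) : ℂ))).PosSemidef :=
      Matrix.PosSemidef.diagonal (fun i => by
        simpa using Complex.zero_le_real.mpr (hf i))
    simpa [Matrix.star_eq_conjTranspose] using hdiag.mul_mul_conjTranspose_same U
  have hexp : NormedSpace.exp A
      = U * Matrix.diagonal (fun i => (Real.exp (lam i) : ℂ)) * star U := by
    rw [hspec, ← hUinv, Matrix.exp_conj U _ ⟨Unitary.toUnits hA.eigenvectorUnitary, rfl⟩, hUinv,
      Matrix.exp_diagonal, Pi.exp_def, ← Complex.exp_eq_exp_ℂ]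
    simp only [← Complex.ofReal_exp]
  have hAA : A * A = U * (Matrix.diagonal (fun i => ((lam i : ℂ) * lam i))) * star U := by
    rw [hspec]
    calc (U * Matrix.diagonal (fun i => (lam i : ℂ)) * star U)
        * (U * Matrix.diagonal (fun i => (lam i : ℂ)) * star U)
        = U * (Matrix.diagonal (fun i => (lam i : ℂ)) * (star U * U)
            * Matrix.diagonal (fun i => (lam i : ℂ))) * star U := by
          simp only [Matrix.mul_assoc]
      _ = U * (Matrix.diagonal (fun i => ((lam i : ℂ) * lam i))) * star U := by
          rw [hU2, Matrix.mul_one, Matrix.diagonal_mul_diagonal]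
  constructor
  · rw [hexp]
    exact hpsd Real.exp fun i => (Real.exp_pos _).le
  · have key : 1 + A + A * A - NormedSpace.exp A
        = U * Matrix.diagonal
            (fun i => ((1 + lam i + lam i * lam i - Real.exp (lam i) : ℝ) : ℂ)) * star U := by
      have h1 : (1 : Matrix (Fin d) (Fin d) ℂ) = U * Matrix.diagonal (fun _ => (1:ℂ)) * star U := by
        rw [Matrix.diagonal_one, Matrix.mul_one, hU1]
      have hadd : ∀ v w : Fin d → ℂ,
          (U * Matrix.diagonal v) * star U + (U * Matrix.diagonal w) * star U
            = (U * Matrix.diagonal (fun i => v i + w i)) * star U := by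
        intro v w
        rw [show Matrix.diagonal (fun i => v i + w i) = Matrix.diagonal v + Matrix.diagonal w by
          rw [Matrix.diagonal_add], Matrix.mul_add, Matrix.add_mul]
      have hsub : ∀ v w : Fin d → ℂ,
          (U * Matrix.diagonal v) * star U - (U * Matrix.diagonal w) * star U
            = (U * Matrix.diagonal (fun i => v i - w i)) * star U := by
        intro v w
        rw [show Matrix.diagonal (fun i => v i - w i) = Matrix.diagonal v - Matrix.diagonal w by
          rw [Matrix.diagonal_sub], Matrix.mul_sub, Matrix.sub_mul]
      rw [hexp, hAA, h1]
      nth_rewrite 1 [hspec]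
      rw [hadd, hadd, hsub]
      congr 2
      funext i
      push_cast
      ring
    rw [key]
    refine hpsd (fun x => 1 + x + x * x - Real.exp x) fun i => ?_
    have h5 := aux_exp_le (hb i)
    show 0 ≤ 1 + lam i + lam i * lam i - Real.exp (lam i)
    nlinarith [h5]

lemma integrable_quad {Ω : Type*} [MeasurableSpace Ω] {d : ℕ} (μ : Measure Ω) (N : Ω → Matrix (Fin d) (Fin d) ℂ)
    (hN : ∀ i j, Integrable (fun ω => N ω i j) μ) (x : Fin d → ℂ) :
    Integrable (fun ω => star x ⬝ᵥ (N ω *ᵥ x)) μ := by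
  simp only [dotProduct, mulVec, Pi.star_apply]
  exact integrable_finset_sum _ fun i _ =>
    (integrable_finset_sum _ fun j _ => (hN i j).mul_const (x j)).const_mul _

lemma integral_quad {Ω : Type*} [MeasurableSpace Ω] {d : ℕ} (μ : Measure Ω) (N : Ω → Matrix (Fin d) (Fin d) ℂ)
    (hN : ∀ i j, Integrable (fun ω => N ω i j) μ) (x : Fin d → ℂ) :
    ∫ ω, star x ⬝ᵥ (N ω *ᵥ x) ∂μ = star x ⬝ᵥ (matExp μ N *ᵥ x) := by
  simp only [dotProduct, mulVec, Pi.star_apply, matExp]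
  rw [integral_finset_sum _ (fun i _ =>
    (integrable_finset_sum _ fun j _ => (hN i j).mul_const (x j)).const_mul _)]
  refine Finset.sum_congr rfl fun i _ => ?_
  rw [integral_const_mul]
  congr 1
  rw [integral_finset_sum _ (fun j _ => (hN i j).mul_const (x j))]
  exact Finset.sum_congr rfl fun j _ => integral_mul_const _ _

theorem opNorm_matExp_exp_le {Ω : Type*} [MeasurableSpace Ω] (μ : Measure Ω)
    [IsProbabilityMeasure μ] {d : ℕ}
    (Y : Ω → Matrix (Fin d) (Fin d) ℂ)
    (hherm : ∀ᵐ ω ∂μ, (Y ω).IsHermitian)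
    (hbound : ∀ᵐ ω ∂μ, opNorm (Y ω) ≤ 1)
    (hint : ∀ i j, Integrable (fun ω => Y ω i j) μ)
    (hint2 : ∀ i j, Integrable (fun ω => (Y ω * Y ω) i j) μ)
    (hintexp : ∀ i j, Integrable (fun ω => NormedSpace.exp (Y ω) i j) μ)
    (hmean : matExp μ Y = 0) :
    opNorm (matExp μ (fun ω => NormedSpace.exp (Y ω))) ≤
      Real.exp (opNorm (matExp μ (fun ω => Y ω * Y ω))) := by
  classical
  set M1 := matExp μ (fun ω => NormedSpace.exp (Y ω)) with hM1def
  set M2 := matExp μ (fun ω => Y ω * Y ω) with hM2def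
  set φ := Matrix.toEuclideanCLM (n := Fin d) (𝕜 := ℂ) with hφ
  set T := φ M1 with hTdef
  set S := φ M2 with hSdef
  have hgoal : opNorm M1 = ‖T‖ ∧ opNorm M2 = ‖S‖ := ⟨rfl, rfl⟩
  rw [hgoal.1, hgoal.2]
  -- a.e. facts
  have hae : ∀ᵐ ω ∂μ, (NormedSpace.exp (Y ω)).PosSemidef ∧
      (1 + Y ω + Y ω * Y ω - NormedSpace.exp (Y ω)).PosSemidef := by
    filter_upwards [hherm, hbound] with ω h1 h2
    exact psd_main h1 (fun i => eig_abs_le h1 h2 i)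
  -- M1 is Hermitian
  have hM1herm : M1.IsHermitian := by
    refine Matrix.ext fun i j => ?_
    rw [Matrix.conjTranspose_apply]
    show star (∫ ω, NormedSpace.exp (Y ω) j i ∂μ) = ∫ ω, NormedSpace.exp (Y ω) i j ∂μ
    rw [show (star (∫ ω, NormedSpace.exp (Y ω) j i ∂μ) : ℂ)
        = ∫ ω, (starRingEnd ℂ) (NormedSpace.exp (Y ω) j i) ∂μ from (integral_conj).symm]
    refine integral_congr_ae ?_
    filter_upwards [hae] with ω hw
    have h3 : (NormedSpace.exp (Y ω))ᴴ = NormedSpace.exp (Y ω) := hw.1.isHermitian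
    calc (starRingEnd ℂ) (NormedSpace.exp (Y ω) j i)
        = (NormedSpace.exp (Y ω))ᴴ i j := rfl
      _ = NormedSpace.exp (Y ω) i j := by rw [h3]
  have hTsa : IsSelfAdjoint T := by
    show star (φ M1) = φ M1
    rw [← map_star]
    exact congrArg φ hM1herm
  -- quadratic form identity
  have hinner : ∀ (M : Matrix (Fin d) (Fin d) ℂ) (x : EuclideanSpace ℂ (Fin d)),
      (inner ℂ x (φ M x) : ℂ) = star ((WithLp.equiv 2 (Fin d → ℂ)) x) ⬝ᵥ
        (M *ᵥ ((WithLp.equiv 2 (Fin d → ℂ)) x)) := by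
    intro M x
    rw [EuclideanSpace.inner_eq_star_dotProduct]
    exact dotProduct_comm _ _
  -- main pointwise bounds
  have hmain : ∀ x : EuclideanSpace ℂ (Fin d),
      0 ≤ RCLike.re (inner ℂ x (T x) : ℂ) ∧
        RCLike.re (inner ℂ x (T x) : ℂ) ≤ (1 + ‖S‖) * ‖x‖ ^ 2 := by
    intro x
    set xv := (WithLp.equiv 2 (Fin d → ℂ)) x with hxv
    have hint1 : Integrable (fun ω => star xv ⬝ᵥ (NormedSpace.exp (Y ω) *ᵥ xv)) μ :=
      integrable_quad μ _ hintexp xv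
    have hre1 : RCLike.re (inner ℂ x (T x) : ℂ)
        = ∫ ω, RCLike.re (star xv ⬝ᵥ (NormedSpace.exp (Y ω) *ᵥ xv)) ∂μ := by
      rw [hinner M1 x, ← integral_quad μ _ hintexp xv, integral_re hint1]
    constructor
    · rw [hre1]
      apply integral_nonneg_of_ae
      filter_upwards [hae] with ω hw
      exact hw.1.re_dotProduct_nonneg xv
    · rw [hre1]
      have hintY := (integrable_quad μ Y hint xv).re
      have hintY2 := (integrable_quad μ _ hint2 xv).re
      have hub : ∀ᵐ ω ∂μ, RCLike.re (star xv ⬝ᵥ (NormedSpace.exp (Y ω) *ᵥ xv)) ≤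
          RCLike.re (star xv ⬝ᵥ xv) + RCLike.re (star xv ⬝ᵥ (Y ω *ᵥ xv))
            + RCLike.re (star xv ⬝ᵥ ((Y ω * Y ω) *ᵥ xv)) := by
        filter_upwards [hae] with ω hw
        have h0 := hw.2.re_dotProduct_nonneg xv
        have hexpand : star xv ⬝ᵥ ((1 + Y ω + Y ω * Y ω - NormedSpace.exp (Y ω)) *ᵥ xv)
            = star xv ⬝ᵥ xv + star xv ⬝ᵥ (Y ω *ᵥ xv) + star xv ⬝ᵥ ((Y ω * Y ω) *ᵥ xv)
              - star xv ⬝ᵥ (NormedSpace.exp (Y ω) *ᵥ xv) := by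
          simp [Matrix.add_mulVec, Matrix.sub_mulVec, Matrix.one_mulVec, dotProduct_add,
            dotProduct_sub]
        rw [hexpand] at h0
        simp only [map_add, map_sub] at h0
        linarith
      have hintRHS : Integrable (fun ω => RCLike.re (star xv ⬝ᵥ xv)
          + RCLike.re (star xv ⬝ᵥ (Y ω *ᵥ xv))
          + RCLike.re (star xv ⬝ᵥ ((Y ω * Y ω) *ᵥ xv))) μ :=
        ((integrable_const _).add hintY).add hintY2
      have step1 := integral_mono_ae hint1.re hintRHS hub
      have step2 : ∫ ω, (RCLike.re (star xv ⬝ᵥ xv)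
          + RCLike.re (star xv ⬝ᵥ (Y ω *ᵥ xv))
          + RCLike.re (star xv ⬝ᵥ ((Y ω * Y ω) *ᵥ xv))) ∂μ
          = RCLike.re (star xv ⬝ᵥ xv) + ∫ ω, RCLike.re (star xv ⬝ᵥ (Y ω *ᵥ xv)) ∂μ
            + ∫ ω, RCLike.re (star xv ⬝ᵥ ((Y ω * Y ω) *ᵥ xv)) ∂μ := by
        rw [integral_add (μ := μ)
            (f := fun ω => RCLike.re (star xv ⬝ᵥ xv) + RCLike.re (star xv ⬝ᵥ (Y ω *ᵥ xv)))
            (g := fun ω => RCLike.re (star xv ⬝ᵥ ((Y ω * Y ω) *ᵥ xv)))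
            ((integrable_const _).add hintY) hintY2,
          integral_add (μ := μ) (f := fun _ => RCLike.re (star xv ⬝ᵥ xv))
            (g := fun ω => RCLike.re (star xv ⬝ᵥ (Y ω *ᵥ xv))) (integrable_const _) hintY,
          integral_const]
        simp [measure_univ]
      have hY0 : ∫ ω, RCLike.re (star xv ⬝ᵥ (Y ω *ᵥ xv)) ∂μ = 0 := by
        rw [integral_re (integrable_quad μ Y hint xv), integral_quad μ Y hint xv, hmean]
        simp
      have hY2 : ∫ ω, RCLike.re (star xv ⬝ᵥ ((Y ω * Y ω) *ᵥ xv)) ∂μ ≤ ‖S‖ * ‖x‖ ^ 2 := by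
        rw [integral_re (integrable_quad μ _ hint2 xv), integral_quad μ _ hint2 xv]
        have h4 : (star xv ⬝ᵥ (M2 *ᵥ xv)) = (inner ℂ x (S x) : ℂ) := (hinner M2 x).symm
        rw [h4]
        calc RCLike.re (inner ℂ x (S x) : ℂ) ≤ ‖(inner ℂ x (S x) : ℂ)‖ := RCLike.re_le_norm _
          _ ≤ ‖x‖ * ‖S x‖ := norm_inner_le_norm x (S x)
          _ ≤ ‖x‖ * (‖S‖ * ‖x‖) := by
              have := S.le_opNorm x
              have hx0 : (0:ℝ) ≤ ‖x‖ := norm_nonneg x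
              nlinarith [this]
          _ = ‖S‖ * ‖x‖ ^ 2 := by ring
      have hxx : RCLike.re (star xv ⬝ᵥ xv) = ‖x‖ ^ 2 := by
        rw [show (star xv ⬝ᵥ xv : ℂ) = (inner ℂ x x : ℂ) by
          rw [EuclideanSpace.inner_eq_star_dotProduct]; exact dotProduct_comm _ _]
        exact inner_self_eq_norm_sq x
      rw [step2, hY0, hxx] at step1
      calc _ ≤ ‖x‖^2 + 0 + ∫ ω, RCLike.re (star xv ⬝ᵥ ((Y ω * Y ω) *ᵥ xv)) ∂μ := step1
        _ ≤ ‖x‖^2 + 0 + ‖S‖ * ‖x‖^2 := by linarith [hY2]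
        _ = (1 + ‖S‖) * ‖x‖^2 := by ring
  -- order facts
  have hc : (0:ℝ) ≤ 1 + ‖S‖ := by positivity
  have hTpos : 0 ≤ T := by
    rw [ContinuousLinearMap.nonneg_iff_isPositive]
    refine ⟨ContinuousLinearMap.isSelfAdjoint_iff_isSymmetric.mp hTsa, fun x => ?_⟩
    rw [ContinuousLinearMap.reApplyInnerSelf_apply, ← inner_re_symm]
    exact (hmain x).1
  have hle : T ≤ algebraMap ℝ _ (1 + ‖S‖) := by
    rw [ContinuousLinearMap.le_def]
    constructor
    · refine ContinuousLinearMap.isSelfAdjoint_iff_isSymmetric.mp (IsSelfAdjoint.sub ?_ hTsa)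
      rw [Algebra.algebraMap_eq_smul_one]
      exact (IsSelfAdjoint.all _).smul (IsSelfAdjoint.one _)
    · intro x
      rw [ContinuousLinearMap.reApplyInnerSelf_apply, ← inner_re_symm,
        ContinuousLinearMap.sub_apply, inner_sub_right, map_sub,
        Algebra.algebraMap_eq_smul_one, ContinuousLinearMap.smul_apply,
        ContinuousLinearMap.one_apply, RCLike.real_smul_eq_coe_smul (K := ℂ),
        inner_smul_right, RCLike.re_ofReal_mul, inner_self_eq_norm_sq]
      have h2 := (hmain x).2
      linarith
  have hnorm : ‖T‖ ≤ 1 + ‖S‖ := (CStarAlgebra.norm_le_iff_le_algebraMap T hc hTpos).mpr hle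
  have hexp : 1 + ‖S‖ ≤ Real.exp ‖S‖ := by
    have := Real.add_one_le_exp ‖S‖
    linarith
  linarith
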